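/- Let M > 0, α ≥ 0, and let ρ₂ be the unique zero in (0, 1) of J(r) = π/(4M) − 2·∑_{n=2}^∞ r^{n−1}/(αn + 1 − α). Define F₂ on the unit disc D by F₂(z) = (π/(4M))·z − ∑_{n=2}^∞ 2·zⁿ/(α·n² + (1 − α)·n). Then for every r with ρ₂ < r ≤ 1 there exist z₁ ≠ z₂ in D_r with F₂(z₁) = F₂(z₂); that is, F₂ is not injective on D_r for any r ∈ (ρ₂, 1]. Hence the univalence radius ρ₂ in the Landau-type theorem for W⁰_H(α) is sharp. -/

import Mathlib

open Real

section LandauAux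

lemma landau_aux_pow_sub_pow_le {x y : ℝ} (hy : 0 ≤ y) (hxy : y ≤ x) (m : ℕ) :
    x ^ (m+1) - y ^ (m+1) ≤ (m+1) * x ^ m * (x - y) := by
  induction m with
  | zero => simp
  | succ m ih =>
      have hx : 0 ≤ x := hy.trans hxy
      have h1 : y ^ (m+1) ≤ x ^ (m+1) := pow_le_pow_left₀ hy hxy _
      have h2 : x ^ (m+1+1) - y ^ (m+1+1)
          = x * (x ^ (m+1) - y ^ (m+1)) + y ^ (m+1) * (x - y) := by ring
      have h3 : x * (x ^ (m+1) - y ^ (m+1)) ≤ x * ((m+1) * x ^ m * (x - y)) :=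
        mul_le_mul_of_nonneg_left ih hx
      have h4 : y ^ (m+1) * (x - y) ≤ x ^ (m+1) * (x - y) :=
        mul_le_mul_of_nonneg_right h1 (by linarith)
      have : x * ((m+1) * x ^ m * (x - y)) = (m+1) * x ^ (m+1) * (x - y) := by ring
      push_cast
      nlinarith [pow_nonneg hx m]

lemma landau_aux_le_pow_sub_pow {x y : ℝ} (hy : 0 ≤ y) (hxy : y ≤ x) (m : ℕ) :
    (m+1) * y ^ m * (x - y) ≤ x ^ (m+1) - y ^ (m+1) := by
  induction m with
  | zero => simp
  | succ m ih =>
      have hx : 0 ≤ x := hy.trans hxy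
      have h1 : y ^ (m+1) ≤ x ^ (m+1) := pow_le_pow_left₀ hy hxy _
      have hym : 0 ≤ y ^ m := pow_nonneg hy m
      have hym1 : 0 ≤ y ^ (m+1) := pow_nonneg hy (m+1)
      have h2 : x ^ (m+1+1) - y ^ (m+1+1)
          = x * (x ^ (m+1) - y ^ (m+1)) + y ^ (m+1) * (x - y) := by ring
      have h5 : x * ((↑m+1) * y ^ m * (x - y)) ≤ x * (x ^ (m+1) - y ^ (m+1)) :=
        mul_le_mul_of_nonneg_left ih hx
      have h6 : y * ((↑m+1) * y ^ m * (x - y)) ≤ x * ((↑m+1) * y ^ m * (x - y)) :=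
        mul_le_mul_of_nonneg_right hxy
          (by have := sub_nonneg.2 hxy; positivity)
      have h7 : y * ((↑m+1) * y ^ m * (x - y)) = (↑m+1) * y ^ (m+1) * (x - y) := by ring
      push_cast
      nlinarith [mul_nonneg hym1 (sub_nonneg.2 hxy)]

end LandauAux

theorem landau_W0Ha_sharpness (M α : ℝ) (hM : 0 < M) (hα : 0 ≤ α)
    (ρ₂ : ℝ) (hρ₂ : ρ₂ ∈ Set.Ioo (0:ℝ) 1)
    (hroot : Real.pi / (4 * M)
        - 2 * ∑' n : ℕ, ρ₂ ^ (n + 1) / (α * (n + 2) + 1 - α) = 0)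
    (huniq : ∀ r ∈ Set.Ioo (0:ℝ) 1,
      Real.pi / (4 * M)
          - 2 * ∑' n : ℕ, r ^ (n + 1) / (α * (n + 2) + 1 - α) = 0 → r = ρ₂) :
    ∀ r : ℝ, ρ₂ < r → r ≤ 1 →
      ∃ z₁ ∈ Metric.ball (0:ℂ) r, ∃ z₂ ∈ Metric.ball (0:ℂ) r, z₁ ≠ z₂ ∧
        ((Real.pi / (4 * M) : ℝ) : ℂ) * z₁
            - ∑' n : ℕ, 2 * z₁ ^ (n + 2)
                / ((α : ℂ) * (n + 2) ^ 2 + (1 - (α : ℂ)) * (n + 2)) =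
          ((Real.pi / (4 * M) : ℝ) : ℂ) * z₂
            - ∑' n : ℕ, 2 * z₂ ^ (n + 2)
                / ((α : ℂ) * (n + 2) ^ 2 + (1 - (α : ℂ)) * (n + 2)) := by
  obtain ⟨hρ0, hρ1⟩ := hρ₂
  intro r hrρ hr1
  -- real coefficient sequences
  set c : ℕ → ℝ := fun n => α * (n + 2) + 1 - α with hc_def
  set d : ℕ → ℝ := fun n => α * (n + 2) ^ 2 + (1 - α) * (n + 2) with hd_def
  have hc1 : ∀ n, (1:ℝ) ≤ c n := by
    intro n
    have hn : (0:ℝ) ≤ n := Nat.cast_nonneg n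
    simp only [hc_def]
    nlinarith
  have hc0 : ∀ n, (0:ℝ) < c n := fun n => lt_of_lt_of_le one_pos (hc1 n)
  have hd2 : ∀ n, (2:ℝ) ≤ d n := by
    intro n
    have hn : (0:ℝ) ≤ n := Nat.cast_nonneg n
    simp only [hd_def]
    nlinarith [mul_nonneg hα (mul_nonneg (by linarith : (0:ℝ) ≤ (n:ℝ)+2) (by linarith : (0:ℝ) ≤ (n:ℝ)+1))]
  have hd0 : ∀ n, (0:ℝ) < d n := fun n => lt_of_lt_of_le two_pos (hd2 n)
  have hdc : ∀ n, d n = (n + 2) * c n := by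
    intro n; simp only [hc_def, hd_def]; ring
  -- the real extremal function
  set g : ℝ → ℝ := fun x => π / (4 * M) * x - ∑' n : ℕ, 2 * x ^ (n + 2) / d n with hg_def
  -- summability
  have hsumg : ∀ x : ℝ, |x| < 1 → Summable (fun n : ℕ => 2 * x ^ (n + 2) / d n) := by
    intro x hx
    have hgeo : Summable (fun n : ℕ => 2 * |x| ^ 2 * |x| ^ n) :=
      (summable_geometric_of_lt_one (abs_nonneg x) hx).mul_left _
    refine hgeo.of_norm_bounded (fun n => ?_)
    have h1 : |2 * x ^ (n + 2) / d n| = 2 * |x| ^ (n + 2) / d n := by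
      rw [abs_div, abs_mul, abs_pow, abs_of_pos (hd0 n)]
      norm_num
    rw [Real.norm_eq_abs, h1]
    have h2 : 2 * |x| ^ (n + 2) / d n ≤ 2 * |x| ^ (n + 2) / 1 :=
      div_le_div_of_nonneg_left (by positivity) one_pos (le_trans one_le_two (hd2 n))
    calc 2 * |x| ^ (n + 2) / d n ≤ 2 * |x| ^ (n + 2) / 1 := h2
      _ = 2 * |x| ^ 2 * |x| ^ n := by rw [div_one, pow_add]; ring
  have hsumJ : ∀ x : ℝ, |x| < 1 → Summable (fun n : ℕ => 2 * x ^ (n + 1) / c n) := by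
    intro x hx
    have hgeo : Summable (fun n : ℕ => 2 * |x| * |x| ^ n) :=
      (summable_geometric_of_lt_one (abs_nonneg x) hx).mul_left _
    refine hgeo.of_norm_bounded (fun n => ?_)
    have h1 : |2 * x ^ (n + 1) / c n| = 2 * |x| ^ (n + 1) / c n := by
      rw [abs_div, abs_mul, abs_pow, abs_of_pos (hc0 n)]
      norm_num
    rw [Real.norm_eq_abs, h1]
    calc 2 * |x| ^ (n + 1) / c n ≤ 2 * |x| ^ (n + 1) / 1 :=
          div_le_div_of_nonneg_left (by positivity) one_pos (hc1 n)
      _ = 2 * |x| * |x| ^ n := by rw [div_one, pow_add]; ring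
  have hρabs : |ρ₂| < 1 := by rw [abs_of_pos hρ0]; exact hρ1
  -- the root equation
  have hJ : π / (4 * M) = ∑' n : ℕ, 2 * ρ₂ ^ (n + 1) / c n := by
    have h2 : (∑' n : ℕ, 2 * ρ₂ ^ (n + 1) / c n) = 2 * ∑' n : ℕ, ρ₂ ^ (n + 1) / c n := by
      rw [← tsum_mul_left]
      exact tsum_congr fun n => by rw [mul_div_assoc]
    rw [h2]
    linarith [hroot]
  -- difference formula
  have hdiff : ∀ x y : ℝ, |x| < 1 → |y| < 1 →
      g x - g y = ∑' n : ℕ,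
        (2 / d n) * ((n + 2) * (x - y) * ρ₂ ^ (n + 1) - (x ^ (n + 2) - y ^ (n + 2))) := by
    intro x y hx hy
    have hP : Summable (fun n : ℕ => (x - y) * (2 * ρ₂ ^ (n + 1) / c n)) :=
      (hsumJ ρ₂ hρabs).mul_left _
    have hQ := hsumg x hx
    have hR := hsumg y hy
    have e1 : g x - g y
        = (x - y) * (π / (4 * M))
          - ((∑' n : ℕ, 2 * x ^ (n + 2) / d n) - ∑' n : ℕ, 2 * y ^ (n + 2) / d n) := by
      simp only [hg_def]; ring
    rw [e1, hJ, ← tsum_mul_left, ← Summable.tsum_sub hQ hR, ← Summable.tsum_sub hP (hQ.sub hR)]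
    refine tsum_congr fun n => ?_
    have hdn := (hd0 n).ne'
    have hcn := (hc0 n).ne'
    rw [hdc n]
    field_simp
  -- summable of the difference terms
  have hsumD : ∀ x y : ℝ, |x| < 1 → |y| < 1 →
      Summable (fun n : ℕ =>
        (2 / d n) * ((n + 2) * (x - y) * ρ₂ ^ (n + 1) - (x ^ (n + 2) - y ^ (n + 2)))) := by
    intro x y hx hy
    have hP : Summable (fun n : ℕ => (x - y) * (2 * ρ₂ ^ (n + 1) / c n)) :=
      (hsumJ ρ₂ hρabs).mul_left _
    refine ((hP.sub ((hsumg x hx).sub (hsumg y hy))).congr fun n => ?_)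
    have hdn := (hd0 n).ne'
    have hcn := (hc0 n).ne'
    rw [hdc n]
    field_simp
  -- strict monotone increasing on [0, ρ₂]
  have hmono : ∀ x y : ℝ, 0 ≤ y → y < x → x ≤ ρ₂ → g y < g x := by
    intro x y hy0 hyx hxρ
    have hx0 : 0 ≤ x := hy0.trans hyx.le
    have hx1 : |x| < 1 := by
      rw [abs_of_nonneg hx0]; exact lt_of_le_of_lt hxρ hρ1
    have hy1 : |y| < 1 := by
      rw [abs_of_nonneg hy0]; exact lt_of_lt_of_le hyx (hxρ.trans hρ1.le)
    have key : (0:ℝ) < g x - g y := by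
      rw [hdiff x y hx1 hy1]
      have hle : ∀ n : ℕ, (0:ℝ)
          ≤ (2 / d n) * ((n + 2) * (x - y) * ρ₂ ^ (n + 1) - (x ^ (n + 2) - y ^ (n + 2))) := by
        intro n
        have h1 : x ^ (n + 2) - y ^ (n + 2) ≤ (n + 2) * x ^ (n + 1) * (x - y) := by
          have h := landau_aux_pow_sub_pow_le hy0 hyx.le (n + 1)
          push_cast at h
          norm_num at h ⊢
          nlinarith [h]
        have h2 : x ^ (n + 1) ≤ ρ₂ ^ (n + 1) := pow_le_pow_left₀ (hy0.trans hyx.le) hxρ _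
        have h3 : (n + 2 : ℝ) * x ^ (n + 1) * (x - y) ≤ (n + 2) * ρ₂ ^ (n + 1) * (x - y) := by
          apply mul_le_mul_of_nonneg_right _ (by linarith)
          apply mul_le_mul_of_nonneg_left h2 (by positivity)
        have hin : (0:ℝ) ≤ (n + 2) * (x - y) * ρ₂ ^ (n + 1) - (x ^ (n + 2) - y ^ (n + 2)) := by
          nlinarith
        exact mul_nonneg (div_nonneg (by norm_num) (hd0 n).le) hin
      have h0 : (0:ℝ)
          < (2 / d 0) * ((((0:ℕ):ℝ) + 2) * (x - y) * ρ₂ ^ (0 + 1) - (x ^ (0 + 2) - y ^ (0 + 2))) := by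
        have hinner : (0:ℝ)
            < (((0:ℕ):ℝ) + 2) * (x - y) * ρ₂ ^ (0 + 1) - (x ^ (0 + 2) - y ^ (0 + 2)) := by
          push_cast
          nlinarith [mul_pos (sub_pos.2 hyx) (by linarith : (0:ℝ) < 2 * ρ₂ - (x + y))]
        exact mul_pos (div_pos two_pos (hd0 0)) hinner
      have := Summable.tsum_lt_tsum (f := fun _ : ℕ => (0:ℝ)) (i := 0) (fun n => hle n) h0
        summable_zero (hsumD x y hx1 hy1)
      simpa using this
    linarith
  -- strict decrease after ρ₂
  have hdec : ∀ x : ℝ, ρ₂ < x → x < 1 → g x < g ρ₂ := by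
    intro x hρx hx1'
    have hx1 : |x| < 1 := by rw [abs_of_pos (hρ0.trans hρx)]; exact hx1'
    have key : g x - g ρ₂ < 0 := by
      rw [hdiff x ρ₂ hx1 hρabs]
      have hle : ∀ n : ℕ,
          (2 / d n) * ((n + 2) * (x - ρ₂) * ρ₂ ^ (n + 1) - (x ^ (n + 2) - ρ₂ ^ (n + 2)))
            ≤ (0:ℝ) := by
        intro n
        have h1 : (n + 2 : ℝ) * ρ₂ ^ (n + 1) * (x - ρ₂) ≤ x ^ (n + 2) - ρ₂ ^ (n + 2) := by
          have h := landau_aux_le_pow_sub_pow hρ0.le hρx.le (n + 1)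
          push_cast at h
          norm_num at h ⊢
          nlinarith [h]
        have hin : (n + 2 : ℝ) * (x - ρ₂) * ρ₂ ^ (n + 1) - (x ^ (n + 2) - ρ₂ ^ (n + 2)) ≤ 0 := by
          nlinarith
        have h2d : (0:ℝ) ≤ 2 / d n := div_nonneg (by norm_num) (hd0 n).le
        exact mul_nonpos_of_nonneg_of_nonpos h2d hin
      have h0 : (2 / d 0) * ((((0:ℕ):ℝ) + 2) * (x - ρ₂) * ρ₂ ^ (0 + 1) - (x ^ (0 + 2) - ρ₂ ^ (0 + 2)))
          < (0:ℝ) := by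
        have hinner : (((0:ℕ):ℝ) + 2) * (x - ρ₂) * ρ₂ ^ (0 + 1) - (x ^ (0 + 2) - ρ₂ ^ (0 + 2))
            < 0 := by
          push_cast
          nlinarith [mul_pos (sub_pos.2 hρx) (sub_pos.2 hρx)]
        exact mul_neg_of_pos_of_neg (div_pos two_pos (hd0 0)) hinner
      have := Summable.tsum_lt_tsum (g := fun _ : ℕ => (0:ℝ)) (i := 0) (fun n => hle n) h0
        (hsumD x ρ₂ hx1 hρabs) summable_zero
      simpa using this
    linarith
  have hg0 : g 0 = 0 := by
    simp only [hg_def]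
    simp
  have hgρpos : 0 < g ρ₂ := by
    have := hmono ρ₂ 0 le_rfl hρ0 le_rfl
    rwa [hg0] at this
  -- the point x₂ = b
  set b : ℝ := (ρ₂ + r) / 2 with hb_def
  have hb0 : 0 < b := by simp only [hb_def]; linarith
  have hρb : ρ₂ < b := by simp only [hb_def]; linarith
  have hbr : b < r := by simp only [hb_def]; linarith
  have hb1 : b < 1 := lt_of_lt_of_le hbr hr1
  have hgb : g b < g ρ₂ := hdec b hρb hb1
  -- continuous clamped version of g
  set G : ℝ → ℝ :=
    fun x => π / (4 * M) * x - ∑' n : ℕ, 2 * (max 0 (min x b)) ^ (n + 2) / d n with hG_def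
  have hcl : Continuous fun x : ℝ => max 0 (min x b) :=
    continuous_const.max (continuous_id.min continuous_const)
  have hGcont : Continuous G := by
    apply Continuous.sub (continuous_const.mul continuous_id)
    apply continuous_tsum (u := fun n : ℕ => 2 * b ^ (n + 2))
    · exact fun n => (continuous_const.mul (hcl.pow _)).div_const _
    · refine ((summable_geometric_of_lt_one hb0.le hb1).mul_left (2 * b ^ 2)).congr fun n => ?_
      rw [pow_add]; ring
    · intro n x
      set t : ℝ := max 0 (min x b) with ht_def
      have ht0 : 0 ≤ t := le_max_left _ _
      have htb : t ≤ b := by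
        simp only [ht_def]
        exact max_le hb0.le (min_le_right _ _)
      have h1 : ‖2 * t ^ (n + 2) / d n‖ = 2 * t ^ (n + 2) / d n := by
        rw [Real.norm_eq_abs, abs_of_nonneg (div_nonneg (by positivity) (hd0 n).le)]
      rw [h1]
      calc 2 * t ^ (n + 2) / d n
          ≤ 2 * b ^ (n + 2) / 1 := by
            apply div_le_div₀ (by positivity) _ one_pos (le_trans one_le_two (hd2 n))
            have := pow_le_pow_left₀ ht0 htb (n + 2)
            linarith
        _ = 2 * b ^ (n + 2) := by rw [div_one]
  have hGg : ∀ x ∈ Set.Icc (0:ℝ) b, G x = g x := by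
    intro x hx
    simp only [hG_def, hg_def, min_eq_left hx.2, max_eq_right hx.1]
  -- find a real pair with equal values
  obtain ⟨a₁, a₂, ha₁0, ha₁b, ha₂0, ha₂b, hane, haeq⟩ :
      ∃ a₁ a₂ : ℝ, 0 ≤ a₁ ∧ a₁ ≤ b ∧ 0 ≤ a₂ ∧ a₂ ≤ b ∧ a₁ ≠ a₂ ∧ g a₁ = g a₂ := by
    by_cases hv : 0 ≤ g b
    · have himg := intermediate_value_Icc hρ0.le hGcont.continuousOn
      have hG0 : G 0 = 0 := by rw [hGg 0 ⟨le_rfl, hb0.le⟩, hg0]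
      have hGρ : G ρ₂ = g ρ₂ := hGg ρ₂ ⟨hρ0.le, hρb.le⟩
      have hmem : g b ∈ Set.Icc (G 0) (G ρ₂) := by
        rw [hG0, hGρ]; exact ⟨hv, hgb.le⟩
      obtain ⟨x₁, hx₁mem, hx₁⟩ := himg hmem
      have hx₁b : x₁ ∈ Set.Icc (0:ℝ) b := ⟨hx₁mem.1, hx₁mem.2.trans hρb.le⟩
      refine ⟨x₁, b, hx₁b.1, hx₁b.2, hb0.le, le_rfl, ?_, ?_⟩
      · exact ne_of_lt (lt_of_le_of_lt hx₁mem.2 hρb)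
      · rw [← hGg x₁ hx₁b, hx₁]
    · have himg := intermediate_value_Icc' hρb.le hGcont.continuousOn
      have hGb : G b = g b := hGg b ⟨hb0.le, le_rfl⟩
      have hGρ : G ρ₂ = g ρ₂ := hGg ρ₂ ⟨hρ0.le, hρb.le⟩
      have hmem : (0:ℝ) ∈ Set.Icc (G b) (G ρ₂) := by
        rw [hGb, hGρ]
        exact ⟨le_of_not_ge hv, hgρpos.le⟩
      obtain ⟨y, hymem, hy⟩ := himg hmem
      have hyb : y ∈ Set.Icc (0:ℝ) b := ⟨hρ0.le.trans hymem.1, hymem.2⟩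
      refine ⟨0, y, le_rfl, hb0.le, hyb.1, hyb.2, ?_, ?_⟩
      · exact ne_of_lt (lt_of_lt_of_le hρ0 hymem.1)
      · rw [hg0, ← hGg y hyb, hy]
  -- cast to the complex statement
  have hts : ∀ x : ℝ,
      (∑' n : ℕ, 2 * (x:ℂ) ^ (n + 2)
          / ((α : ℂ) * (n + 2) ^ 2 + (1 - (α : ℂ)) * (n + 2)))
        = ((∑' n : ℕ, 2 * x ^ (n + 2) / d n : ℝ) : ℂ) := by
    intro x
    rw [Complex.ofReal_tsum]
    refine tsum_congr fun n => ?_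
    simp only [hd_def]
    push_cast
    ring
  have hmemball : ∀ a : ℝ, 0 ≤ a → a ≤ b → (a:ℂ) ∈ Metric.ball (0:ℂ) r := by
    intro a ha0 hab
    rw [Metric.mem_ball, dist_zero_right, Complex.norm_real, Real.norm_eq_abs,
      abs_of_nonneg ha0]
    linarith
  refine ⟨(a₁:ℂ), hmemball a₁ ha₁0 ha₁b, (a₂:ℂ), hmemball a₂ ha₂0 ha₂b, ?_, ?_⟩
  · exact fun h => hane (by exact_mod_cast h)
  · rw [hts a₁, hts a₂]
    simp only [hg_def] at haeq
    exact_mod_cast congrArg (fun t : ℝ => (t : ℂ)) (by linarith [haeq] : π / (4*M) * a₁ - (∑' n : ℕ, 2 * a₁ ^ (n + 2) / d n) = π / (4*M) * a₂ - (∑' n : ℕ, 2 * a₂ ^ (n + 2) / d n))
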